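/- Let n ≥ 2 and let k : ℝⁿ × ℝⁿ → ℝ be a continuously differentiable symmetric kernel with k(x, y) ≠ 0 for x ≠ y. Suppose that for every y ∈ ℝⁿ the vector field x ↦ k(x, y)(y − x) has a symmetric Jacobian everywhere (equivalently, is conservative). Then k is radial: there exists a function φ : [0, ∞) → ℝ such that k(x, y) = φ(‖x − y‖²) for all x, y ∈ ℝⁿ. -/

import Mathlib

noncomputable section

variable {n : ℕ}

lemma keyA {k : EuclideanSpace ℝ (Fin n) → ℝ} (hk : ContDiff ℝ 1 k)
    (y : EuclideanSpace ℝ (Fin n))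
    (hcons : ∀ (x : EuclideanSpace ℝ (Fin n)) (i j : Fin n),
      fderiv ℝ (fun x' => k x' • (y - x')) x (EuclideanSpace.single j 1) i =
      fderiv ℝ (fun x' => k x' • (y - x')) x (EuclideanSpace.single i 1) j)
    (x : EuclideanSpace ℝ (Fin n)) (i j : Fin n) :
    fderiv ℝ k x (EuclideanSpace.single j 1) * (y - x) i
      = fderiv ℝ k x (EuclideanSpace.single i 1) * (y - x) j := by
  have hdk : DifferentiableAt ℝ k x := (hk.differentiable one_ne_zero).differentiableAt
  have hdg : DifferentiableAt ℝ (fun x' : EuclideanSpace ℝ (Fin n) => y - x') x :=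
    ((differentiable_const y).sub differentiable_id).differentiableAt
  have hfd : fderiv ℝ (fun x' : EuclideanSpace ℝ (Fin n) => y - x') x
      = -(ContinuousLinearMap.id ℝ _) := by
    rw [fderiv_fun_sub (differentiableAt_const y) differentiableAt_fun_id]
    simp
  have h := hcons x i j
  rw [fderiv_fun_smul hdk hdg, hfd] at h
  simp only [ContinuousLinearMap.add_apply, ContinuousLinearMap.coe_smul',
    Pi.smul_apply, ContinuousLinearMap.smulRight_apply, ContinuousLinearMap.neg_apply,
    ContinuousLinearMap.id_apply, PiLp.add_apply, PiLp.smul_apply, PiLp.neg_apply,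
    smul_eq_mul, PiLp.sub_apply, EuclideanSpace.single_apply] at h
  simp only [PiLp.sub_apply]
  by_cases hij : i = j
  · subst hij; linarith [h]
  · simp [hij, Ne.symm hij] at h; linarith [h]


-- decomposition of a vector in terms of singles
lemma decomp (w : EuclideanSpace ℝ (Fin n)) :
    w = ∑ j, w j • EuclideanSpace.single j (1:ℝ) := by
  ext l
  rw [WithLp.ofLp_sum, Finset.sum_apply]
  simp [EuclideanSpace.single_apply]

lemma keyB {k : EuclideanSpace ℝ (Fin n) → ℝ}
    (y x : EuclideanSpace ℝ (Fin n)) (hxy : x ≠ y)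
    (hA : ∀ i j : Fin n,
      fderiv ℝ k x (EuclideanSpace.single j 1) * (y - x) i
        = fderiv ℝ k x (EuclideanSpace.single i 1) * (y - x) j)
    (w : EuclideanSpace ℝ (Fin n)) (hw : inner ℝ w (y - x) = (0:ℝ)) :
    fderiv ℝ k x w = 0 := by
  have hd : y - x ≠ 0 := sub_ne_zero.mpr (Ne.symm hxy)
  obtain ⟨i0, hi0⟩ : ∃ i0, (y - x) i0 ≠ 0 := by
    by_contra h
    push_neg at h
    exact hd (by ext l; simp [h l])
  set g : Fin n → ℝ := fun j => fderiv ℝ k x (EuclideanSpace.single j 1) with hg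
  have hgj : ∀ j, g j = (g i0 / (y - x) i0) * (y - x) j := fun j => by
    rw [div_mul_eq_mul_div, eq_div_iff hi0]
    exact hA i0 j
  have hw' : (∑ j, w j * (y - x) j) = 0 := by
    rw [← hw, PiLp.inner_apply]
    simp [RCLike.inner_apply, conj_trivial, mul_comm]
  calc fderiv ℝ k x w = fderiv ℝ k x (∑ j, w j • EuclideanSpace.single j (1:ℝ)) := by
        rw [← decomp w]
    _ = ∑ j, w j * g j := by
        rw [map_sum]
        simp [hg, smul_eq_mul]
    _ = (g i0 / (y - x) i0) * ∑ j, w j * (y - x) j := by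
        rw [Finset.mul_sum]
        congr 1; ext j; rw [hgj j]; ring
    _ = 0 := by rw [hw']; ring


lemma exists_orth (hn : 2 ≤ n) (u : EuclideanSpace ℝ (Fin n)) (hu : ‖u‖ = 1) :
    ∃ v : EuclideanSpace ℝ (Fin n), ‖v‖ = 1 ∧ inner ℝ u v = (0:ℝ) := by
  have key : ∃ w : EuclideanSpace ℝ (Fin n), w ≠ 0 ∧ inner ℝ u w = (0:ℝ) := by
    set i0 : Fin n := ⟨0, by omega⟩ with hi0
    set i1 : Fin n := ⟨1, by omega⟩ with hi1
    have hne : i0 ≠ i1 := by simp [hi0, hi1, Fin.ext_iff]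
    set e0 : EuclideanSpace ℝ (Fin n) := EuclideanSpace.single i0 1 with he0d
    set e1 : EuclideanSpace ℝ (Fin n) := EuclideanSpace.single i1 1 with he1d
    have horth : ∀ (e : EuclideanSpace ℝ (Fin n)),
        inner ℝ u (e - (inner ℝ u e : ℝ) • u) = (0:ℝ) := by
      intro e
      rw [inner_sub_right, real_inner_smul_right, real_inner_self_eq_norm_sq, hu]
      ring
    set c0 : ℝ := inner ℝ u e0 with hc0d
    set c1 : ℝ := inner ℝ u e1 with hc1d
    by_cases h0 : e0 - c0 • u = 0
    · refine ⟨e1 - c1 • u, ?_, horth e1⟩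
      intro h1
      have he0 : e0 = c0 • u := by rwa [sub_eq_zero] at h0
      have he1 : e1 = c1 • u := by rwa [sub_eq_zero] at h1
      have h10 : (0:ℝ) = c1 * u i0 := by
        have h := congrArg (fun z : EuclideanSpace ℝ (Fin n) => z i0) he1
        simp only [he1d, PiLp.smul_apply, smul_eq_mul, EuclideanSpace.single_apply] at h
        rwa [if_neg hne] at h
      have h00 : (1:ℝ) = c0 * u i0 := by
        have h := congrArg (fun z : EuclideanSpace ℝ (Fin n) => z i0) he0
        simp only [he0d, PiLp.smul_apply, smul_eq_mul, EuclideanSpace.single_apply] at h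
        simpa using h
      have hu0 : u i0 ≠ 0 := by
        intro h; rw [h] at h00; simp at h00
      have hc1 : c1 = 0 := by
        rcases mul_eq_zero.mp h10.symm with h | h
        · exact h
        · exact absurd h hu0
      have hz : e1 = 0 := by rw [he1, hc1, zero_smul]
      have h := congrArg (fun z : EuclideanSpace ℝ (Fin n) => z i1) hz
      simp only [he1d, EuclideanSpace.single_apply] at h
      simp at h
    · exact ⟨e0 - c0 • u, h0, horth e0⟩
  obtain ⟨w, hw0, hwu⟩ := key
  refine ⟨‖w‖⁻¹ • w, ?_, ?_⟩
  · rw [norm_smul, norm_inv, norm_norm, inv_mul_cancel₀ (norm_ne_zero_iff.mpr hw0)]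
  · rw [real_inner_smul_right, hwu, mul_zero]

lemma circleConst {f : EuclideanSpace ℝ (Fin n) → ℝ} (hf : ContDiff ℝ 1 f)
    (y : EuclideanSpace ℝ (Fin n))
    (hB : ∀ x w, x ≠ y → inner ℝ w (y - x) = (0:ℝ) → fderiv ℝ f x w = 0)
    (u v : EuclideanSpace ℝ (Fin n)) (hu : ‖u‖ = 1) (hv : ‖v‖ = 1)
    (huv : inner ℝ u v = (0:ℝ)) (r : ℝ) (hr : 0 < r) (t : ℝ) :
    f (y + (r * Real.cos t) • u + (r * Real.sin t) • v)
      = f (y + (r * Real.cos 0) • u + (r * Real.sin 0) • v) := by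
  set γ : ℝ → EuclideanSpace ℝ (Fin n) :=
    fun s => y + (r * Real.cos s) • u + (r * Real.sin s) • v with hγd
  have hdiff : ∀ s, γ s - y = (r * Real.cos s) • u + (r * Real.sin s) • v := by
    intro s; simp only [hγd]; abel
  have hnorm : ∀ s, ‖γ s - y‖ ^ 2 = r ^ 2 := by
    intro s
    rw [hdiff s, norm_add_sq_real, real_inner_smul_left, real_inner_smul_right, huv,
      norm_smul, norm_smul, hu, hv]
    have := Real.sin_sq_add_cos_sq s
    simp only [Real.norm_eq_abs, mul_one, mul_zero]
    rw [sq_abs, sq_abs]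
    nlinarith
  have hne : ∀ s, γ s ≠ y := by
    intro s h
    have h2 := hnorm s
    rw [h, sub_self, norm_zero] at h2
    nlinarith
  have hγ' : ∀ s, HasDerivAt γ ((r * -Real.sin s) • u + (r * Real.cos s) • v) s := by
    intro s
    have h1 : HasDerivAt (fun s => r * Real.cos s) (r * -Real.sin s) s :=
      (Real.hasDerivAt_cos s).const_mul r
    have h2 : HasDerivAt (fun s => r * Real.sin s) (r * Real.cos s) s :=
      (Real.hasDerivAt_sin s).const_mul r
    exact ((h1.smul_const u).const_add y).add (h2.smul_const v)
  have hderiv : ∀ s, HasDerivAt (fun s => f (γ s)) 0 s := by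
    intro s
    have hfd : HasFDerivAt f (fderiv ℝ f (γ s)) (γ s) :=
      ((hf.differentiable one_ne_zero) (γ s)).hasFDerivAt
    have h := hfd.comp_hasDerivAt s (hγ' s)
    have hzero : fderiv ℝ f (γ s)
        ((r * -Real.sin s) • u + (r * Real.cos s) • v) = 0 := by
      apply hB (γ s) _ (hne s)
      have hyγ : y - γ s = -((r * Real.cos s) • u + (r * Real.sin s) • v) := by
        rw [← hdiff s]; abel
      have hvu : inner ℝ v u = (0:ℝ) := by rw [real_inner_comm]; exact huv
      rw [hyγ]
      simp only [hvu, inner_neg_right, inner_add_left, inner_add_right,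
        real_inner_smul_left, real_inner_smul_right,
        real_inner_self_eq_norm_mul_norm, hu, hv, huv, real_inner_comm v u]
      ring
    rwa [hzero] at h
  exact is_const_of_deriv_eq_zero
    (fun s => (hderiv s).differentiableAt) (fun s => (hderiv s).deriv) t 0

lemma sphereConst (hn : 2 ≤ n) {f : EuclideanSpace ℝ (Fin n) → ℝ} (hf : ContDiff ℝ 1 f)
    (y : EuclideanSpace ℝ (Fin n))
    (hB : ∀ x w, x ≠ y → inner ℝ w (y - x) = (0:ℝ) → fderiv ℝ f x w = 0)
    (x x' : EuclideanSpace ℝ (Fin n)) (h : ‖x - y‖ = ‖x' - y‖) : f x = f x' := by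
  rcases eq_or_lt_of_le (norm_nonneg (x - y)) with h0 | hr
  · have hx : x = y := by
      rw [← sub_eq_zero]; exact norm_eq_zero.mp h0.symm
    have hx' : x' = y := by
      rw [← sub_eq_zero]; apply norm_eq_zero.mp; rw [← h]; exact h0.symm
    rw [hx, hx']
  · set r : ℝ := ‖x - y‖ with hrd
    have hrne : r ≠ 0 := ne_of_gt hr
    set u : EuclideanSpace ℝ (Fin n) := r⁻¹ • (x - y) with hud
    set u' : EuclideanSpace ℝ (Fin n) := r⁻¹ • (x' - y) with hu'd
    have hu : ‖u‖ = 1 := by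
      rw [hud, norm_smul, norm_inv, Real.norm_eq_abs, abs_of_pos hr, ← hrd,
        inv_mul_cancel₀ hrne]
    have hu' : ‖u'‖ = 1 := by
      rw [hu'd, norm_smul, norm_inv, Real.norm_eq_abs, abs_of_pos hr, ← h,
        inv_mul_cancel₀ hrne]
    set c : ℝ := inner ℝ u u' with hcd
    set w : EuclideanSpace ℝ (Fin n) := u' - c • u with hwd
    have huw : inner ℝ u w = (0:ℝ) := by
      rw [hwd, inner_sub_right, real_inner_smul_right u u c,
        real_inner_self_eq_norm_mul_norm, hu, hcd]
      ring
    set s : ℝ := ‖w‖ with hsd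
    have hs0 : 0 ≤ s := norm_nonneg w
    have hcs : c ^ 2 + s ^ 2 = 1 := by
      have hu'w : u' = c • u + w := by rw [hwd]; abel
      have hns : ‖u'‖ ^ 2 = c ^ 2 + s ^ 2 := by
        rw [hu'w, norm_add_sq_real, real_inner_smul_left, huw, norm_smul c u, hu,
          Real.norm_eq_abs, hsd, mul_one, mul_zero, sq_abs]
        ring
      rw [hu', one_pow] at hns
      linarith
    obtain ⟨v, hv, huv, hdecomp⟩ : ∃ v : EuclideanSpace ℝ (Fin n),
        ‖v‖ = 1 ∧ inner ℝ u v = (0:ℝ) ∧ u' = c • u + s • v := by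
      by_cases hw0 : w = 0
      · obtain ⟨v, hv, huv⟩ := exists_orth hn u hu
        refine ⟨v, hv, huv, ?_⟩
        have hs : s = 0 := by rw [hsd, hw0, norm_zero]
        rw [hs, zero_smul, add_zero]
        have h2 := hwd ▸ hw0
        rwa [sub_eq_zero] at h2
      · have hsne : s ≠ 0 := fun h2 => hw0 (norm_eq_zero.mp (hsd.symm.trans h2))
        have hspos : 0 < s := lt_of_le_of_ne hs0 (Ne.symm hsne)
        refine ⟨s⁻¹ • w, ?_, ?_, ?_⟩
        · rw [norm_smul, norm_inv, Real.norm_eq_abs, abs_of_pos hspos, ← hsd,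
            inv_mul_cancel₀ hsne]
        · rw [real_inner_smul_right, huw, mul_zero]
        · rw [smul_smul s s⁻¹ w, mul_inv_cancel₀ hsne, one_smul, hwd]
          abel
    have hc1 : -1 ≤ c ∧ c ≤ 1 := by constructor <;> nlinarith
    set θ : ℝ := Real.arccos c with hθd
    have hcosθ : Real.cos θ = c := Real.cos_arccos hc1.1 hc1.2
    have hsinθ : Real.sin θ = s := by
      rw [hθd, Real.sin_arccos, show 1 - c ^ 2 = s ^ 2 by linarith, Real.sqrt_sq hs0]
    have key := circleConst hf y hB u v hu hv huv r hr θ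
    have hsum : (r * Real.cos θ) • u + (r * Real.sin θ) • v = x' - y := by
      have h1 : (r * c) • u + (r * s) • v = r • u' := by
        rw [hdecomp, smul_add, smul_smul r c u, smul_smul r s v]
      rw [hcosθ, hsinθ, h1, hu'd, smul_smul r r⁻¹ (x' - y), mul_inv_cancel₀ hrne,
        one_smul]
    have e1 : y + (r * Real.cos θ) • u + (r * Real.sin θ) • v = x' := by
      rw [add_assoc, hsum]; abel
    have hsum2 : (r * Real.cos 0) • u + (r * Real.sin 0) • v = x - y := by
      rw [Real.cos_zero, Real.sin_zero, mul_one, mul_zero, zero_smul, add_zero, hud,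
        smul_smul r r⁻¹ (x - y), mul_inv_cancel₀ hrne, one_smul]
    have e2 : y + (r * Real.cos 0) • u + (r * Real.sin 0) • v = x := by
      rw [add_assoc, hsum2]; abel
    rw [e1, e2] at key
    exact key.symm


theorem conservative_subfield_implies_radial {n : ℕ} (hn : 2 ≤ n)
    (k : EuclideanSpace ℝ (Fin n) → EuclideanSpace ℝ (Fin n) → ℝ)
    (hk : ContDiff ℝ 1 (fun p : EuclideanSpace ℝ (Fin n) × EuclideanSpace ℝ (Fin n) =>
      k p.1 p.2))
    (hsymm : ∀ x y, k x y = k y x)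
    (hne : ∀ x y : EuclideanSpace ℝ (Fin n), x ≠ y → k x y ≠ 0)
    (hcons : ∀ (y x : EuclideanSpace ℝ (Fin n)) (i j : Fin n),
      fderiv ℝ (fun x' => k x' y • (y - x')) x (EuclideanSpace.single j 1) i =
      fderiv ℝ (fun x' => k x' y • (y - x')) x (EuclideanSpace.single i 1) j) :
    ∃ φ : ℝ → ℝ, ∀ x y : EuclideanSpace ℝ (Fin n), k x y = φ (‖x - y‖ ^ 2) := by
  have hky : ∀ y, ContDiff ℝ 1 (fun x => k x y) :=
    fun y => hk.comp (contDiff_id.prodMk contDiff_const)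
  have hB : ∀ y x w, x ≠ y → inner ℝ w (y - x) = (0:ℝ) →
      fderiv ℝ (fun x => k x y) x w = 0 := by
    intro y x w hxy hw
    exact keyB y x hxy (fun i j => keyA (hky y) y (hcons y) x i j) w hw
  have hsphere : ∀ y x x', ‖x - y‖ = ‖x' - y‖ → k x y = k x' y :=
    fun y x x' h => sphereConst hn (hky y) y (hB y) x x' h
  -- the reference unit vector
  set e0 : EuclideanSpace ℝ (Fin n) := EuclideanSpace.single ⟨0, by omega⟩ 1 with he0d
  have he0 : ‖e0‖ = 1 := by
    rw [he0d, EuclideanSpace.norm_single, norm_one]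
  set V : ℝ → EuclideanSpace ℝ (Fin n) → ℝ := fun r y => k (y + r • e0) y with hVd
  have hbase : ∀ (r : ℝ), 0 ≤ r → ∀ y : EuclideanSpace ℝ (Fin n),
      ‖(y + r • e0) - y‖ = r := by
    intro r hr y
    rw [add_sub_cancel_left, norm_smul, he0, Real.norm_eq_abs, abs_of_nonneg hr, mul_one]
  have hVal : ∀ (r : ℝ), 0 ≤ r → ∀ y a, ‖a - y‖ = r → k a y = V r y := by
    intro r hr y a ha
    exact hsphere y a (y + r • e0) (by rw [ha, hbase r hr y])
  have hV2 : ∀ (r : ℝ), 0 < r → ∀ y z : EuclideanSpace ℝ (Fin n),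
      ‖y - z‖ ≤ 2 * r → V r y = V r z := by
    intro r hr y z hyz
    -- find m with dist r to both
    obtain ⟨m, hmy, hmz⟩ : ∃ m : EuclideanSpace ℝ (Fin n),
        ‖m - y‖ = r ∧ ‖m - z‖ = r := by
      rcases eq_or_ne z y with hzy | hzy
      · exact ⟨y + r • e0, by rw [hbase r hr.le], by rw [hzy, hbase r hr.le]⟩
      · set d : ℝ := ‖z - y‖ with hdd
        have hd0 : 0 < d := norm_pos_iff.mpr (sub_ne_zero.mpr hzy)
        have hdr : d ≤ 2 * r := by rw [hdd, norm_sub_rev]; exact hyz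
        set u : EuclideanSpace ℝ (Fin n) := d⁻¹ • (z - y) with hud
        have hu : ‖u‖ = 1 := by
          rw [hud, norm_smul, norm_inv, Real.norm_eq_abs, abs_of_pos hd0, ← hdd,
            inv_mul_cancel₀ (ne_of_gt hd0)]
        obtain ⟨v, hv, huv⟩ := exists_orth hn u hu
        set h : ℝ := Real.sqrt (r ^ 2 - (d / 2) ^ 2) with hhd
        have hh0 : 0 ≤ h := Real.sqrt_nonneg _
        have hh2 : h ^ 2 = r ^ 2 - (d / 2) ^ 2 := by
          rw [hhd, Real.sq_sqrt (by nlinarith)]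
        set m : EuclideanSpace ℝ (Fin n) := y + (d / 2) • u + h • v with hmd
        have hmyv : m - y = (d / 2) • u + h • v := by rw [hmd]; abel
        have hzwu : z - y = d • u := by
          rw [hud, smul_smul, mul_inv_cancel₀ (ne_of_gt hd0), one_smul]
        have hmzv : m - z = (d / 2 - d) • u + h • v := by
          rw [hmd, sub_smul]
          have : z = y + d • u := by rw [← hzwu]; abel
          rw [this]; abel
        have hnorm : ∀ (a : ℝ), ‖a • u + h • v‖ ^ 2 = a ^ 2 + h ^ 2 := by
          intro a
          rw [norm_add_sq_real, real_inner_smul_left, real_inner_smul_right, huv,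
            norm_smul a u, norm_smul h v, hu, hv, Real.norm_eq_abs, Real.norm_eq_abs]
          simp only [mul_one, mul_zero]
          rw [sq_abs, sq_abs]; ring
        refine ⟨m, ?_, ?_⟩
        · have h1 : ‖m - y‖ ^ 2 = r ^ 2 := by rw [hmyv, hnorm]; rw [hh2]; ring
          calc ‖m - y‖ = Real.sqrt (‖m - y‖ ^ 2) := (Real.sqrt_sq (norm_nonneg _)).symm
            _ = Real.sqrt (r ^ 2) := by rw [h1]
            _ = r := Real.sqrt_sq hr.le
        · have h1 : ‖m - z‖ ^ 2 = r ^ 2 := by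
            rw [hmzv, hnorm, hh2]; ring
          calc ‖m - z‖ = Real.sqrt (‖m - z‖ ^ 2) := (Real.sqrt_sq (norm_nonneg _)).symm
            _ = Real.sqrt (r ^ 2) := by rw [h1]
            _ = r := Real.sqrt_sq hr.le
    calc V r y = k m y := (hVal r hr.le y m hmy).symm
      _ = k y m := hsymm m y
      _ = V r m := hVal r hr.le m y (by rw [norm_sub_rev]; exact hmy)
      _ = k z m := (hVal r hr.le m z (by rw [norm_sub_rev]; exact hmz)).symm
      _ = k m z := hsymm z m
      _ = V r z := hVal r hr.le z m hmz
  have hV3 : ∀ (r : ℝ), 0 < r → ∀ N : ℕ, ∀ y z : EuclideanSpace ℝ (Fin n),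
      ‖y - z‖ ≤ 2 * r * N → V r y = V r z := by
    intro r hr N
    induction N with
    | zero =>
      intro y z hyz
      simp only [Nat.cast_zero, mul_zero] at hyz
      have : y = z := by
        rw [← sub_eq_zero]
        exact norm_le_zero_iff.mp hyz
      rw [this]
    | succ N ih =>
      intro y z hyz
      by_cases hcase : ‖y - z‖ ≤ 2 * r
      · exact hV2 r hr y z hcase
      · push_neg at hcase
        have hd0 : 0 < ‖y - z‖ := lt_trans (by positivity) hcase
        have hzyne : z ≠ y := fun h => by rw [h, sub_self, norm_zero] at hd0; exact lt_irrefl 0 hd0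
        set d : ℝ := ‖y - z‖ with hdd
        set p : EuclideanSpace ℝ (Fin n) := y + (2 * r / d) • (z - y) with hpd
        have hpy : ‖y - p‖ = 2 * r := by
          have : y - p = -((2 * r / d) • (z - y)) := by rw [hpd]; abel
          rw [this, norm_neg, norm_smul, Real.norm_eq_abs,
            abs_of_pos (by positivity), norm_sub_rev, ← hdd]
          field_simp
        have hpz : ‖p - z‖ ≤ 2 * r * N := by
          have hexp : p - z = (1 - 2 * r / d) • (y - z) := by
            rw [hpd, sub_smul, one_smul]
            have : (2 * r / d) • (z - y) = -((2 * r / d) • (y - z)) := by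
              rw [← smul_neg, neg_sub]
            rw [this]; abel
          have hcoef : 0 ≤ 1 - 2 * r / d := by
            rw [sub_nonneg, div_le_one hd0]
            exact hcase.le
          rw [hexp, norm_smul, Real.norm_eq_abs, abs_of_nonneg hcoef, ← hdd]
          have : (1 - 2 * r / d) * d = d - 2 * r := by field_simp
          rw [this]
          push_cast
          push_cast at hyz
          linarith
        calc V r y = V r p := hV2 r hr y p hpy.le
          _ = V r z := ih p z hpz
  have hVconst : ∀ (r : ℝ), 0 < r → ∀ y z : EuclideanSpace ℝ (Fin n), V r y = V r z := by
    intro r hr y z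
    set N : ℕ := ⌈‖y - z‖ / (2 * r)⌉₊ with hNd
    apply hV3 r hr N y z
    have h1 : ‖y - z‖ / (2 * r) ≤ N := Nat.le_ceil _
    calc ‖y - z‖ = ‖y - z‖ / (2 * r) * (2 * r) := by field_simp
      _ ≤ N * (2 * r) := by
          apply mul_le_mul_of_nonneg_right h1 (by positivity)
      _ = 2 * r * N := by ring
  refine ⟨fun t => k (Real.sqrt t • e0) 0, ?_⟩
  intro x y
  rcases eq_or_ne x y with rfl | hxy
  · -- diagonal case, via continuity
    simp only [sub_self, norm_zero, ne_eq, OfNat.ofNat_ne_zero, not_false_eq_true,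
      zero_pow, Real.sqrt_zero, zero_smul]
    have hkc : Continuous fun p : EuclideanSpace ℝ (Fin n) × EuclideanSpace ℝ (Fin n) =>
        k p.1 p.2 := hk.continuous
    have hc1 : Continuous fun ε : ℝ => k (x + ε • e0) x := by
      have := hkc.comp (f := fun ε : ℝ => (x + ε • e0, x))
        ((continuous_const.add (continuous_id.smul continuous_const)).prodMk
          continuous_const)
      exact this
    have hc2 : Continuous fun ε : ℝ => k (ε • e0) 0 := by
      have := hkc.comp (f := fun ε : ℝ => (ε • e0, (0 : EuclideanSpace ℝ (Fin n))))
        ((continuous_id.smul continuous_const).prodMk continuous_const)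
      exact this
    have hlim1 : Filter.Tendsto (fun ε : ℝ => k (x + ε • e0) x) (nhdsWithin 0 (Set.Ioi 0))
        (nhds (k x x)) := by
      have := hc1.tendsto 0
      simp only [zero_smul, add_zero] at this
      exact this.mono_left nhdsWithin_le_nhds
    have hlim2 : Filter.Tendsto (fun ε : ℝ => k (ε • e0) 0) (nhdsWithin 0 (Set.Ioi 0))
        (nhds (k 0 0)) := by
      have := hc2.tendsto 0
      simp only [zero_smul] at this
      exact this.mono_left nhdsWithin_le_nhds
    have heq : ∀ᶠ ε : ℝ in nhdsWithin (0:ℝ) (Set.Ioi 0),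
        k (x + ε • e0) x = k (ε • e0) 0 := by
      filter_upwards [self_mem_nhdsWithin] with ε hε
      have hε0 : (0:ℝ) < ε := hε
      have h1 : k (x + ε • e0) x = V ε x := rfl
      have h2 : V ε 0 = k (0 + ε • e0) 0 := rfl
      rw [h1, hVconst ε hε0 x 0, h2, zero_add]
    exact tendsto_nhds_unique (hlim1.congr' heq) hlim2
  · have hr : 0 < ‖x - y‖ := norm_pos_iff.mpr (sub_ne_zero.mpr hxy)
    have hsq : Real.sqrt (‖x - y‖ ^ 2) = ‖x - y‖ := Real.sqrt_sq (norm_nonneg _)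
    show k x y = k (Real.sqrt (‖x - y‖ ^ 2) • e0) 0
    rw [hsq]
    have h1 : k x y = V ‖x - y‖ y := hVal ‖x - y‖ hr.le y x rfl
    have h2 : V ‖x - y‖ 0 = k (0 + ‖x - y‖ • e0) 0 := rfl
    rw [h1, hVconst ‖x - y‖ hr y 0, h2, zero_add]
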